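/- Any string α over {0,1} that can be partitioned into finite blocks of length at most C each containing both letters 0 and 1 is quasi-isometric to (01)^ω (quasi-isometries exist in both directions). -/

import Mathlib

set_option maxHeartbeats 1000000

def IsQI {Γ : Type*} (α β : ℕ → Γ) (f : ℕ → ℕ) (A B : ℝ) : Prop :=
  1 ≤ A ∧ 0 ≤ B ∧ (∀ n, α n = β (f n)) ∧
  (∀ x y : ℕ, (1 / A) * |(x : ℝ) - (y : ℝ)| - B ≤ |(f x : ℝ) - (f y : ℝ)| ∧
      |(f x : ℝ) - (f y : ℝ)| ≤ A * |(x : ℝ) - (y : ℝ)| + B) ∧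
  (∀ m : ℕ, ∃ x : ℕ, |(m : ℝ) - (f x : ℝ)| ≤ A)

/-- `α ≤_QI β`: there is a quasi-isometry from `α` to `β`. -/
def QI {Γ : Type*} (α β : ℕ → Γ) : Prop := ∃ f A B, IsQI α β f A B

lemma qi_div_lower {A B t s : ℝ} (hA : 0 < A) (h : t ≤ A * s + A * B) :
    (1 / A) * t - B ≤ s := by
  have h1 : (1 / A) * t ≤ (1 / A) * (A * s + A * B) :=
    mul_le_mul_of_nonneg_left h (by positivity)
  have h2 : (1 / A) * (A * s + A * B) = s + B := by field_simp
  linarith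

/-- Any string over `{0,1}` that can be partitioned into consecutive finite blocks of
length at most `C`, each containing both letters `0` and `1`, is quasi-isometric to
`(01)^ω` (in both directions). -/
theorem blocks_both_letters_QI_zeroOne (α : ℕ → Fin 2) (C : ℕ) (k : ℕ → ℕ)
    (hk0 : k 0 = 0) (hmono : StrictMono k) (hC : ∀ i, k (i + 1) - k i ≤ C)
    (hboth : ∀ i, (∃ j, k i ≤ j ∧ j < k (i + 1) ∧ α j = 0) ∧
                  (∃ j, k i ≤ j ∧ j < k (i + 1) ∧ α j = 1)) :
    QI α (fun i => if i % 2 = 0 then (0 : Fin 2) else 1) ∧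
    QI (fun i => if i % 2 = 0 then (0 : Fin 2) else 1) α := by
  classical
  have hfin : ∀ v : Fin 2, v = 0 ∨ v = 1 := by decide
  have hk_le : ∀ i, k (i + 1) ≤ k i + C := by
    intro i
    have h1 := hC i
    have h2 := (hmono (Nat.lt_succ_self i)).le
    omega
  have hk_lb : ∀ a b : ℕ, a ≤ b → k a + (b - a) ≤ k b := by
    intro a b h
    induction b with
    | zero =>
      have ha : a = 0 := by omega
      subst ha; omega
    | succ n ih =>
      show k a + (n + 1 - a) ≤ k (n + 1)
      rcases Nat.eq_or_lt_of_le h with h' | h'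
      · subst h'; omega
      · have h2 := hmono (show n < n + 1 by omega)
        have h3 := ih (by omega)
        omega
  have hk_add : ∀ i j : ℕ, k (i + j) ≤ k i + j * C := by
    intro i j
    induction j with
    | zero => simp
    | succ n ih =>
      have h1 := hk_le (i + n)
      have e2 : (n + 1) * C = n * C + C := by ring
      show k (i + n + 1) ≤ k i + (n + 1) * C
      omega
  have hk_ge : ∀ i, i ≤ k i := fun i => hmono.le_apply
  -- C ≥ 2
  have hC2 : 2 ≤ C := by
    obtain ⟨j0c, hj0c1, hj0c2, hj0c3⟩ := (hboth 0).1
    obtain ⟨j1c, hj1c1, hj1c2, hj1c3⟩ := (hboth 0).2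
    have hne : j0c ≠ j1c := by
      intro h; rw [h, hj1c3] at hj0c3; exact absurd hj0c3 (by decide)
    have h0 := hC 0
    norm_num at hj0c1 hj0c2 hj1c1 hj1c2 h0
    omega
  have hCR : (2:ℝ) ≤ (C:ℝ) := by exact_mod_cast hC2
  have hA1 : (1:ℝ) ≤ 2 * (C:ℝ) := by linarith
  have hB0 : (0:ℝ) ≤ 2 * (C:ℝ) := by linarith
  have hApos : (0:ℝ) < 2 * (C:ℝ) := by linarith
  -- block index function b
  have hbex : ∀ n : ℕ, ∃ i, k i ≤ n ∧ n < k (i + 1) := by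
    intro n
    induction n with
    | zero =>
      refine ⟨0, by omega, ?_⟩
      have := hmono (show 0 < 0 + 1 by omega); omega
    | succ n ih =>
      obtain ⟨i, h1, h2⟩ := ih
      rcases Nat.lt_or_ge (n + 1) (k (i + 1)) with h | h
      · exact ⟨i, by omega, h⟩
      · refine ⟨i + 1, h, ?_⟩
        have := hmono (show i + 1 < i + 1 + 1 by omega); omega
  choose b hb1 hb2 using hbex
  have hbuniq : ∀ i n, k i ≤ n → n < k (i + 1) → b n = i := by
    intro i n h1 h2
    by_contra h
    rcases Nat.lt_or_ge (b n) i with h' | h'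
    · have h3 := hmono.monotone (show b n + 1 ≤ i from h')
      have := hb1 n; have := hb2 n; omega
    · have h3 := hmono.monotone (show i + 1 ≤ b n by omega)
      have := hb1 n; have := hb2 n; omega
  have hbstep : ∀ n, b (n + 1) ≤ b n + 1 := by
    intro n
    by_contra h
    have h1 := hmono (show b n + 1 < b (n + 1) by omega)
    have := hb1 (n + 1); have := hb2 n; omega
  have hbmono : ∀ x y : ℕ, y ≤ x → b y ≤ b x := by
    intro x y h
    have h1 : k (b y) < k (b x + 1) := by
      have := hb1 y; have := hb2 x; omega
    have := hmono.lt_iff_lt.mp h1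
    omega
  have hblip : ∀ d y : ℕ, b (y + d) ≤ b y + d := by
    intro d
    induction d with
    | zero => simp
    | succ n ih =>
      intro y
      have h1 := hbstep (y + n)
      have h2 := ih y
      show b (y + n + 1) ≤ b y + (n + 1)
      omega
  -- the forward map
  set f : ℕ → ℕ := fun n => 2 * b n + ((α n) : ℕ) with hfdef
  have hfe : ∀ n, f n = 2 * b n + ((α n) : ℕ) := fun n => rfl
  have hval : ∀ n, ((α n) : ℕ) ≤ 1 := fun n => by have := (α n).isLt; omega
  -- the backward map
  choose p hp1 hp2 hp3 using fun i => (hboth i).1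
  choose q hq1 hq2 hq3 using fun i => (hboth i).2
  set g : ℕ → ℕ := fun n => if n % 2 = 0 then p (n / 2) else q (n / 2) with hgdef
  have hg_low : ∀ n, k (n / 2) ≤ g n := by
    intro n; by_cases h : n % 2 = 0 <;> simp [hgdef, h]
    · exact hp1 _
    · exact hq1 _
  have hg_hi : ∀ n, g n < k (n / 2 + 1) := by
    intro n; by_cases h : n % 2 = 0 <;> simp [hgdef, h]
    · exact hp2 _
    · exact hq2 _
  constructor
  · -- QI α (01)^ω
    refine ⟨f, 2 * C, 2 * C, hA1, hB0, ?_, ?_, ?_⟩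
    · -- colour preserving
      intro n
      have hm : f n % 2 = ((α n) : ℕ) % 2 := by rw [hfe n]; omega
      show α n = if f n % 2 = 0 then 0 else 1
      rcases hfin (α n) with h | h
      · rw [h] at hm ⊢; simp at hm; simp [hm]
      · rw [h] at hm ⊢; simp at hm; simp [hm]
    · -- QI bounds
      have key : ∀ x y : ℕ, y ≤ x →
          (1 / (2 * (C:ℝ))) * |(x : ℝ) - (y : ℝ)| - 2 * C ≤ |(f x : ℝ) - (f y : ℝ)| ∧
          |(f x : ℝ) - (f y : ℝ)| ≤ 2 * (C:ℝ) * |(x : ℝ) - (y : ℝ)| + 2 * C := by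
        intro x y h
        have N1 : b y ≤ b x := hbmono x y h
        have N2 : b x + y ≤ b y + x := by
          have h1 := hblip (x - y) y
          have e : y + (x - y) = x := by omega
          rw [e] at h1; omega
        have N3 : x + 1 + b y * C ≤ y + b x * C + C := by
          have h4 := hk_add (b y) (b x + 1 - b y)
          have e3 : b y + (b x + 1 - b y) = b x + 1 := by omega
          rw [e3] at h4
          have e : (b x + 1 - b y) * C + b y * C = (b x + 1) * C := by
            rw [← Nat.add_mul]; congr 1; omega
          have e2 : (b x + 1) * C = b x * C + C := by ring
          have := hb2 x; have := hb1 y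
          omega
        have N4 : f x + 2 * y ≤ f y + 2 * x + 1 := by
          have := hfe x; have := hfe y; have := hval x; have := hval y; omega
        have N5 : f y ≤ f x + 1 := by
          have := hfe x; have := hfe y; have := hval x; have := hval y; omega
        have N7 : f y + 2 * b x ≤ f x + 2 * b y + 1 := by
          have := hfe x; have := hfe y; have := hval x; have := hval y; omega
        have hxyR : (y:ℝ) ≤ (x:ℝ) := by exact_mod_cast h
        have habs : |(x : ℝ) - (y : ℝ)| = (x:ℝ) - y := abs_of_nonneg (by linarith)
        have c4 : (f x : ℝ) + 2 * y ≤ (f y : ℝ) + 2 * x + 1 := by exact_mod_cast N4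
        have c5 : (f y : ℝ) ≤ (f x : ℝ) + 1 := by exact_mod_cast N5
        have c3 : (x:ℝ) + 1 + (b y : ℝ) * C ≤ (y:ℝ) + (b x : ℝ) * C + C := by exact_mod_cast N3
        have c7 : (f y : ℝ) + 2 * (b x : ℝ) ≤ (f x : ℝ) + 2 * (b y : ℝ) + 1 := by exact_mod_cast N7
        constructor
        · -- lower bound
          apply qi_div_lower hApos
          rw [habs]
          have d3 : (f x : ℝ) - f y ≤ |(f x : ℝ) - f y| := le_abs_self _
          have d4 : (0:ℝ) ≤ |(f x : ℝ) - f y| := abs_nonneg _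
          -- x - y ≤ (bx - by)*C + C - 1, bx - by ≤ (fx - fy + 1)/2
          nlinarith [mul_le_mul_of_nonneg_right (show (b x : ℝ) - b y ≤ (|(f x:ℝ) - f y| + 1)/2 by linarith) (show (0:ℝ) ≤ (C:ℝ) by linarith), mul_nonneg (show (0:ℝ) ≤ (C:ℝ) by linarith) d4, sq_nonneg ((C:ℝ) - 2)]
        · -- upper bound
          rw [habs]
          rw [abs_le]
          constructor
          · nlinarith [mul_nonneg (show (0:ℝ) ≤ 2*(C:ℝ) - 0 by linarith) (show (0:ℝ) ≤ (x:ℝ) - y by linarith)]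
          · nlinarith [mul_nonneg (show (0:ℝ) ≤ 2*(C:ℝ) - 2 by linarith) (show (0:ℝ) ≤ (x:ℝ) - y by linarith)]
      intro x y
      rcases le_total y x with h | h
      · exact key x y h
      · obtain ⟨hl, hu⟩ := key y x h
        constructor
        · rw [abs_sub_comm ((x:ℝ)) (y:ℝ), abs_sub_comm ((f x : ℝ)) ((f y : ℝ))]
          exact hl
        · rw [abs_sub_comm ((x:ℝ)) (y:ℝ), abs_sub_comm ((f x : ℝ)) ((f y : ℝ))]
          exact hu
    · -- coarse surjectivity
      intro m
      rcases Nat.mod_two_eq_zero_or_one m with h | h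
      · refine ⟨p (m / 2), ?_⟩
        have hbj : b (p (m / 2)) = m / 2 := hbuniq _ _ (hp1 _) (hp2 _)
        have hfj : f (p (m / 2)) = m := by
          rw [hfe, hbj, hp3]
          simp only [Fin.val_zero]
          omega
        rw [hfj]
        simp only [sub_self, abs_zero]; exact hB0
      · refine ⟨q (m / 2), ?_⟩
        have hbj : b (q (m / 2)) = m / 2 := hbuniq _ _ (hq1 _) (hq2 _)
        have hfj : f (q (m / 2)) = m := by
          rw [hfe, hbj, hq3]
          simp only [Fin.val_one]
          omega
        rw [hfj]
        simp only [sub_self, abs_zero]; exact hB0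
  · -- QI (01)^ω α
    refine ⟨g, 2 * C, 2 * C, hA1, hB0, ?_, ?_, ?_⟩
    · -- colour preserving
      intro n
      by_cases h : n % 2 = 0
      · have hg : g n = p (n / 2) := by simp [hgdef, h]
        show (if n % 2 = 0 then (0 : Fin 2) else 1) = α (g n)
        rw [hg, hp3, if_pos h]
      · have hg : g n = q (n / 2) := by simp [hgdef, h]
        show (if n % 2 = 0 then (0 : Fin 2) else 1) = α (g n)
        rw [hg, hq3, if_neg h]
    · -- QI bounds
      have key : ∀ x y : ℕ, y ≤ x →
          (1 / (2 * (C:ℝ))) * |(x : ℝ) - (y : ℝ)| - 2 * C ≤ |(g x : ℝ) - (g y : ℝ)| ∧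
          |(g x : ℝ) - (g y : ℝ)| ≤ 2 * (C:ℝ) * |(x : ℝ) - (y : ℝ)| + 2 * C := by
        intro x y h
        have M1 : y / 2 ≤ x / 2 := by omega
        have M2 : g x + 1 + (y / 2) * C ≤ g y + (x / 2) * C + C := by
          have h4 := hk_add (y / 2) (x / 2 + 1 - y / 2)
          have e3 : y / 2 + (x / 2 + 1 - y / 2) = x / 2 + 1 := by omega
          rw [e3] at h4
          have e : (x / 2 + 1 - y / 2) * C + (y / 2) * C = (x / 2 + 1) * C := by
            rw [← Nat.add_mul]; congr 1; omega
          have e2 : (x / 2 + 1) * C = (x / 2) * C + C := by ring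
          have := hg_hi x; have := hg_low y
          omega
        have M3 : g y < g x + C := by
          have h1 := hg_hi y
          have h2 := hmono.monotone (show y / 2 + 1 ≤ x / 2 + 1 by omega)
          have h3 := hk_le (x / 2)
          have h4 := hg_low x
          omega
        have hxyR : (y:ℝ) ≤ (x:ℝ) := by exact_mod_cast h
        have habs : |(x : ℝ) - (y : ℝ)| = (x:ℝ) - y := abs_of_nonneg (by linarith)
        have c2 : (g x : ℝ) + 1 + ((y/2 : ℕ) : ℝ) * C ≤ (g y : ℝ) + ((x/2 : ℕ) : ℝ) * C + C := by
          exact_mod_cast M2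
        have c3 : (g y : ℝ) ≤ (g x : ℝ) + C - 1 := by
          have hr : (g y : ℝ) + 1 ≤ (g x : ℝ) + C := by exact_mod_cast M3
          linarith
        have cdiv : ((x/2 : ℕ) : ℝ) - ((y/2 : ℕ) : ℝ) ≤ ((x:ℝ) - y + 1) / 2 := by
          have hn : 2 * (x / 2) + y ≤ 2 * (y / 2) + x + 1 := by omega
          have hr : 2 * ((x/2 : ℕ) : ℝ) + y ≤ 2 * ((y/2 : ℕ) : ℝ) + x + 1 := by
            exact_mod_cast hn
          linarith
        constructor
        · -- lower bound
          apply qi_div_lower hApos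
          rw [habs]
          have d4 : (0:ℝ) ≤ |(g x : ℝ) - g y| := abs_nonneg _
          rcases Nat.eq_or_lt_of_le M1 with hij | hij
          · -- same block: x - y ≤ 1
            have hxy1 : x ≤ y + 1 := by omega
            have : (x:ℝ) ≤ (y:ℝ) + 1 := by exact_mod_cast hxy1
            nlinarith [mul_nonneg hApos.le d4, sq_nonneg ((C:ℝ) - 2)]
          · -- different blocks
            have M4 : g y + x / 2 ≤ g x + y / 2 := by
              have h1 := hk_lb (y / 2 + 1) (x / 2) hij
              have h2 := hg_hi y
              have h3 := hg_low x
              omega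
            have c4 : (g y : ℝ) + ((x/2:ℕ):ℝ) ≤ (g x : ℝ) + ((y/2:ℕ):ℝ) := by exact_mod_cast M4
            have d3 : (g x : ℝ) - g y ≤ |(g x : ℝ) - g y| := le_abs_self _
            -- x - y ≤ 2(i - j) + 1 ≤ 2(gx - gy) + 1
            have hxy : (x:ℝ) - y ≤ 2 * ((g x : ℝ) - g y) + 1 := by
              have hn : x + 2 * (y/2) ≤ y + 2 * (x/2) + 1 := by omega
              have hr : (x:ℝ) + 2 * ((y/2 : ℕ) : ℝ) ≤ (y:ℝ) + 2 * ((x/2 : ℕ) : ℝ) + 1 := by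
                exact_mod_cast hn
              linarith
            nlinarith [mul_nonneg (show (0:ℝ) ≤ 2*(C:ℝ) - 2 by linarith) d4, sq_nonneg ((C:ℝ) - 2)]
        · -- upper bound
          rw [habs, abs_le]
          constructor
          · nlinarith [mul_nonneg (show (0:ℝ) ≤ 2*(C:ℝ) by linarith) (show (0:ℝ) ≤ (x:ℝ) - y by linarith)]
          · -- gx - gy ≤ (i-j)*C + C - 1 ≤ ...
            have key2 : (g x : ℝ) - g y ≤ (((x/2:ℕ):ℝ) - ((y/2:ℕ):ℝ)) * C + C - 1 := by
              nlinarith []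
            have hmul : (((x/2:ℕ):ℝ) - ((y/2:ℕ):ℝ)) * C ≤ (((x:ℝ) - y + 1)/2) * C :=
              mul_le_mul_of_nonneg_right cdiv (by linarith)
            nlinarith [mul_nonneg (show (0:ℝ) ≤ (3/2)*(C:ℝ) by linarith) (show (0:ℝ) ≤ (x:ℝ) - y by linarith)]
      intro x y
      rcases le_total y x with h | h
      · exact key x y h
      · obtain ⟨hl, hu⟩ := key y x h
        constructor
        · rw [abs_sub_comm ((x:ℝ)) (y:ℝ), abs_sub_comm ((g x : ℝ)) ((g y : ℝ))]
          exact hl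
        · rw [abs_sub_comm ((x:ℝ)) (y:ℝ), abs_sub_comm ((g x : ℝ)) ((g y : ℝ))]
          exact hu
    · -- coarse surjectivity
      intro m
      refine ⟨2 * b m, ?_⟩
      have hmod : (2 * b m) % 2 = 0 := by omega
      have hdiv : (2 * b m) / 2 = b m := by omega
      have hg : g (2 * b m) = p (b m) := by simp [hgdef, hmod, hdiv]
      rw [hg]
      have h1 := hp1 (b m)
      have h2 := hp2 (b m)
      have h3 := hk_le (b m)
      have h4 := hb1 m
      have h5 := hb2 m
      have hn1 : m ≤ p (b m) + C := by omega
      have hn2 : p (b m) ≤ m + C := by omega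
      rw [abs_le]
      constructor
      · have : (p (b m) : ℝ) ≤ (m:ℝ) + C := by exact_mod_cast hn2
        linarith
      · have : (m:ℝ) ≤ (p (b m) : ℝ) + C := by exact_mod_cast hn1
        linarith
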